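/- Let S_1, ..., S_{N+1} be i.i.d. real-valued random variables whose common distribution is atomless (so that almost surely all S_i are pairwise distinct), and let α ∈ (0,1). Let k = ⌈(1−α)(N+1)⌉ and let Q be the k-th smallest value among S_1, ..., S_N when k ≤ N, and Q = +∞ otherwise. Then P[ S_{N+1} ≤ Q ] ≤ 1 − α + 1/(N+1). -/

import Mathlib

open MeasureTheory

/-- The `k`-th smallest value (1-indexed) among `f 0, …, f (n-1)`. -/
noncomputable def kthSmallest {n : ℕ} (f : Fin n → ℝ) (k : ℕ) (hk : 1 ≤ k) (hkn : k ≤ n) : ℝ :=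
  f (Tuple.sort f ⟨k - 1, by omega⟩)

theorem card_filter_val_lt {n k : ℕ} (hkn : k ≤ n) :
    (Finset.univ.filter (fun j : Fin n => (j:ℕ) < k)).card = k := by
  have h : Finset.univ.filter (fun j : Fin n => (j:ℕ) < k)
      = Finset.map (Fin.castLEEmb hkn) Finset.univ := by
    ext j
    simp only [Finset.mem_filter, Finset.mem_univ, true_and, Finset.mem_map,
      Fin.castLEEmb_apply]
    constructor
    · intro hj; exact ⟨⟨j, hj⟩, by ext; simp⟩
    · rintro ⟨i, rfl⟩; simp [i.2]
  rw [h, Finset.card_map, Finset.card_univ, Fintype.card_fin]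

/-- reindexing a filter-card along an equiv -/
theorem card_filter_equiv {n : ℕ} (e : Equiv.Perm (Fin n)) (p : Fin n → Prop) [DecidablePred p] :
    (Finset.univ.filter (fun i => p (e i))).card = (Finset.univ.filter p).card := by
  apply Finset.card_bij (fun i _ => e i)
  · intro a ha; simp only [Finset.mem_filter, Finset.mem_univ, true_and] at ha ⊢; exact ha
  · intro a _ b _ h; exact e.injective h
  · intro b hb
    refine ⟨e.symm b, ?_, by simp⟩
    simp only [Finset.mem_filter, Finset.mem_univ, true_and, Equiv.apply_symm_apply] at hb ⊢
    exact hb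

theorem kthSmallest_le_iff {n : ℕ} (f : Fin n → ℝ) (hf : Function.Injective f)
    (k : ℕ) (hk : 1 ≤ k) (hkn : k ≤ n) (s : ℝ) :
    s ≤ kthSmallest f k hk hkn ↔ (Finset.univ.filter (fun i => f i < s)).card < k := by
  set σ := Tuple.sort f
  have hg : StrictMono (f ∘ σ) :=
    (Tuple.monotone_sort f).strictMono_of_injective (hf.comp σ.injective)
  have hcard : (Finset.univ.filter (fun i => f i < s)).card
      = (Finset.univ.filter (fun j => (f ∘ σ) j < s)).card :=
    (card_filter_equiv σ (fun i => f i < s)).symm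
  rw [hcard]
  unfold kthSmallest
  constructor
  · intro hle
    have hsub : Finset.univ.filter (fun j : Fin n => (f ∘ σ) j < s)
        ⊆ Finset.univ.filter (fun j : Fin n => (j:ℕ) < k - 1) := by
      intro j hj
      simp only [Finset.mem_filter, Finset.mem_univ, true_and] at hj ⊢
      have : (f ∘ σ) j < (f ∘ σ) ⟨k-1, by omega⟩ := lt_of_lt_of_le hj hle
      have := hg.lt_iff_lt.mp this
      simpa [Fin.lt_def] using this
    calc (Finset.univ.filter (fun j : Fin n => (f ∘ σ) j < s)).card
        ≤ (Finset.univ.filter (fun j : Fin n => (j:ℕ) < k - 1)).card := Finset.card_le_card hsub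
      _ = k - 1 := card_filter_val_lt (by omega)
      _ < k := by omega
  · intro hcard
    by_contra hlt
    push_neg at hlt
    have hsub : Finset.univ.filter (fun j : Fin n => (j:ℕ) < k)
        ⊆ Finset.univ.filter (fun j : Fin n => (f ∘ σ) j < s) := by
      intro j hj
      simp only [Finset.mem_filter, Finset.mem_univ, true_and] at hj ⊢
      have hle : (f ∘ σ) j ≤ (f ∘ σ) ⟨k-1, by omega⟩ := by
        apply hg.monotone
        simp [Fin.le_def]; omega
      exact lt_of_le_of_lt hle hlt
    have := Finset.card_le_card hsub
    rw [card_filter_val_lt hkn] at this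
    omega

theorem rank_count {n : ℕ} (v : Fin (n+1) → ℝ) (hv : Function.Injective v)
    (k : ℕ) (hkn : k ≤ n + 1) :
    (Finset.univ.filter (fun m =>
      (Finset.univ.filter (fun i => v i < v m)).card < k)).card = k := by
  set r : Fin (n+1) → Fin (n+1) := fun m =>
    ⟨(Finset.univ.filter (fun i => v i < v m)).card, by
      have hsub : Finset.univ.filter (fun i => v i < v m) ⊆ Finset.univ.erase m := by
        intro i hi
        simp only [Finset.mem_filter, Finset.mem_univ, true_and] at hi
        simp only [Finset.mem_erase, Finset.mem_univ, and_true]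
        rintro rfl; exact lt_irrefl _ hi
      have := Finset.card_le_card hsub
      have h2 : (Finset.univ.erase m).card = n := by
        rw [Finset.card_erase_of_mem (Finset.mem_univ m), Finset.card_univ]; simp
      omega⟩
  have hrmono : ∀ a b, v a < v b → (r a : ℕ) < (r b : ℕ) := by
    intro a b hab
    show (Finset.univ.filter (fun i => v i < v a)).card < (Finset.univ.filter (fun i => v i < v b)).card
    apply Finset.card_lt_card
    constructor
    · intro i hi
      simp only [Finset.mem_filter, Finset.mem_univ, true_and] at hi ⊢
      exact hi.trans hab
    · intro hsub
      have := hsub (Finset.mem_filter.mpr ⟨Finset.mem_univ a, hab⟩)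
      simp only [Finset.mem_filter, Finset.mem_univ, true_and] at this
      exact lt_irrefl _ this
  have hrinj : Function.Injective r := by
    intro a b hab
    by_contra hne
    rcases lt_or_gt_of_ne (fun h : v a = v b => hne (hv h)) with h | h
    · exact absurd (congrArg Fin.val hab) (Nat.ne_of_lt (hrmono a b h))
    · exact absurd (congrArg Fin.val hab).symm (Nat.ne_of_lt (hrmono b a h))
  have := card_filter_equiv (Equiv.ofBijective r (Finite.injective_iff_bijective.mp hrinj))
    (fun j : Fin (n+1) => (j : ℕ) < k)
  simp only [Equiv.ofBijective_apply] at this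
  calc (Finset.univ.filter (fun m =>
      (Finset.univ.filter (fun i => v i < v m)).card < k)).card
      = (Finset.univ.filter (fun m => ((r m : ℕ)) < k)).card := rfl
    _ = k := by rw [this, card_filter_val_lt hkn]


theorem joint_law_eq_pi {Ω : Type*} [MeasurableSpace Ω] (P : Measure Ω) [IsProbabilityMeasure P]
    {n : ℕ} (S : Fin (n+1) → Ω → ℝ) (hm : ∀ i, Measurable (S i))
    (hind : ProbabilityTheory.iIndepFun S P)
    (hμ : ∀ i, P.map (S i) = P.map (S 0)) :
    P.map (fun ω i => S i ω) = Measure.pi (fun _ => P.map (S 0)) := by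
  have hP : IsProbabilityMeasure (P.map (S 0)) := Measure.isProbabilityMeasure_map (hm 0).aemeasurable
  symm
  apply Measure.pi_eq
  intro s hs
  rw [Measure.map_apply (measurable_pi_lambda _ fun i => hm i) (MeasurableSet.univ_pi hs)]
  have hpre : (fun ω i => S i ω) ⁻¹' Set.univ.pi s = ⋂ i ∈ Finset.univ, S i ⁻¹' s i := by
    ext ω; simp [Set.mem_pi]
  rw [hpre, hind.measure_inter_preimage_eq_mul Finset.univ (fun i _ => hs i)]
  apply Finset.prod_congr rfl
  intro i _
  rw [← hμ i, Measure.map_apply (hm i) (hs i)]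

theorem indep_eq_null {Ω : Type*} [MeasurableSpace Ω] (P : Measure Ω) [IsProbabilityMeasure P]
    (X Y : Ω → ℝ) (hX : Measurable X) (hY : Measurable Y)
    (hind : ProbabilityTheory.IndepFun X Y P)
    (hY0 : ∀ x : ℝ, P {ω | Y ω = x} = 0) :
    P {ω | X ω = Y ω} = 0 := by
  have hmap := (ProbabilityTheory.indepFun_iff_map_prod_eq_prod_map_map
    hX.aemeasurable hY.aemeasurable).mp hind
  have hD : MeasurableSet {p : ℝ × ℝ | p.1 = p.2} :=
    measurableSet_eq_fun measurable_fst measurable_snd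
  have h1 : {ω | X ω = Y ω} = (fun ω => (X ω, Y ω)) ⁻¹' {p : ℝ × ℝ | p.1 = p.2} := rfl
  rw [h1, ← Measure.map_apply (hX.prodMk hY) hD, hmap, Measure.prod_apply hD]
  have h2 : ∀ x : ℝ, (P.map Y) ({x} : Set ℝ) = 0 := by
    intro x
    rw [Measure.map_apply hY (measurableSet_singleton x)]
    exact hY0 x
  simp [h2]

theorem card_filter_lt_self_le {n : ℕ} (v : Fin (n+1) → ℝ) (m : Fin (n+1)) :
    (Finset.univ.filter (fun i => v i < v m)).card ≤ n := by
  have hsub : Finset.univ.filter (fun i => v i < v m) ⊆ Finset.univ.erase m := by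
    intro i hi
    simp only [Finset.mem_filter, Finset.mem_univ, true_and] at hi
    simp only [Finset.mem_erase, Finset.mem_univ, and_true]
    rintro rfl; exact lt_irrefl _ hi
  have := Finset.card_le_card hsub
  rwa [Finset.card_erase_of_mem (Finset.mem_univ m), Finset.card_univ, Fintype.card_fin] at this

theorem card_filter_castSucc {n : ℕ} (p : Fin (n+1) → Prop) [DecidablePred p]
    (hp : ¬ p (Fin.last n)) :
    (Finset.univ.filter p).card = (Finset.univ.filter (fun i : Fin n => p i.castSucc)).card := by
  symm
  apply Finset.card_bij (fun (i : Fin n) _ => i.castSucc)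
  · intro a ha; simp only [Finset.mem_filter, Finset.mem_univ, true_and] at ha ⊢; exact ha
  · intro a _ b _ h; exact Fin.castSucc_injective n h
  · intro b hb
    simp only [Finset.mem_filter, Finset.mem_univ, true_and] at hb
    have hbl : b ≠ Fin.last n := by rintro rfl; exact hp hb
    have hblt : (b : ℕ) < n := by
      rcases Fin.lt_or_eq_of_le (Fin.le_last b) with h | h
      · exact h
      · exact absurd h hbl
    refine ⟨⟨b, hblt⟩, ?_, by ext; simp⟩
    simp only [Finset.mem_filter, Finset.mem_univ, true_and]
    have he : (⟨b, hblt⟩ : Fin n).castSucc = b := by ext; simp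
    rw [he]; exact hb


/-- **Calibration quantile lemma for split conformal prediction (upper bound).**
Let `S₁, …, S_{N+1}` be i.i.d. real-valued random variables whose common distribution
is atomless, `α ∈ (0,1)`, `k = ⌈(1-α)(N+1)⌉`, and let `Q` be the `k`-th smallest value
among `S₁, …, S_N` when `k ≤ N`, and `Q = +∞` otherwise.  Then
`P[S_{N+1} ≤ Q] ≤ 1 - α + 1/(N+1)`. -/
theorem conformal_calibration_quantile_upper
    {Ω : Type*} [MeasurableSpace Ω] (ℙ : Measure Ω) [IsProbabilityMeasure ℙ]
    (N : ℕ)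
    (S : Fin (N + 1) → Ω → ℝ)
    (hSmeas : ∀ i, Measurable (S i))
    (hindep : ProbabilityTheory.iIndepFun S ℙ)
    (hident : ∀ i j, ProbabilityTheory.IdentDistrib (S i) (S j) ℙ ℙ)
    (hatomless : ∀ (i : Fin (N + 1)) (x : ℝ), ℙ {ω | S i ω = x} = 0)
    (α : ℝ) (hα : α ∈ Set.Ioo (0 : ℝ) 1)
    (k : ℕ) (hk : (k : ℤ) = ⌈(1 - α) * (N + 1)⌉)
    (Q : Ω → EReal)
    (hQ : ∀ ω, Q ω =
      if h : 1 ≤ k ∧ k ≤ N then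
        ((kthSmallest (fun i : Fin N => S i.castSucc ω) k h.1 h.2 : ℝ) : EReal)
      else (⊤ : EReal)) :
    (ℙ {ω | ((S (Fin.last N) ω : ℝ) : EReal) ≤ Q ω}).toReal ≤ 1 - α + 1 / (N + 1) := by
  classical
  obtain ⟨hα0, hα1⟩ := hα
  have hN1 : (0:ℝ) < (N:ℝ) + 1 := by positivity
  have hk1 : 1 ≤ k := by
    have h0 : (0:ℤ) < ⌈(1 - α) * (N + 1)⌉ := Int.ceil_pos.mpr (by nlinarith)
    omega
  have hkN1 : k ≤ N + 1 := by
    have hle : ⌈(1 - α) * ((N:ℝ) + 1)⌉ ≤ ((N:ℤ) + 1) := by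
      apply Int.ceil_le.mpr
      push_cast
      nlinarith
    omega
  -- the common law and the product measure
  set μ : Measure ℝ := ℙ.map (S 0) with hμdef
  have hL1 : ℙ.map (fun ω i => S i ω) = Measure.pi (fun _ => μ) :=
    joint_law_eq_pi ℙ S hSmeas hindep (fun i => (hident i 0).map_eq)
  set ν : Measure (Fin (N+1) → ℝ) := Measure.pi (fun _ => μ) with hνdef
  set J : Ω → (Fin (N+1) → ℝ) := fun ω i => S i ω with hJdef
  have hJmeas : Measurable J := measurable_pi_lambda _ fun i => hSmeas i
  -- the count function and the events
  set cnt : (Fin (N+1) → ℝ) → Fin (N+1) → ℕ :=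
    fun g m => (Finset.univ.filter (fun i => g i < g m)).card with hcntdef
  have hcntmeas : ∀ m, Measurable (fun g => cnt g m) := by
    intro m
    have h : (fun g => cnt g m) = fun g => ∑ i : Fin (N+1), if g i < g m then 1 else 0 := by
      funext g; exact Finset.card_filter _ _
    rw [h]
    exact Finset.measurable_sum _ fun i _ =>
      Measurable.ite (measurableSet_lt (measurable_pi_apply i) (measurable_pi_apply m))
        measurable_const measurable_const
  set A : Fin (N+1) → Set (Fin (N+1) → ℝ) := fun m => {g | cnt g m < k} with hAdef
  have hAmeas : ∀ m, MeasurableSet (A m) := fun m =>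
    (hcntmeas m) (measurableSet_Iio (a := k))
  set C : Fin (N+1) → Set Ω := fun m => J ⁻¹' A m with hCdef
  have hCmeas : ∀ m, MeasurableSet (C m) := fun m => hJmeas (hAmeas m)
  have hPC : ∀ m, ℙ (C m) = ν (A m) := by
    intro m
    rw [hCdef]
    rw [← Measure.map_apply hJmeas (hAmeas m), hJdef, hL1]
  -- symmetry
  have hsym : ∀ m, ν (A m) = ν (A (Fin.last N)) := by
    intro m
    set σ : Equiv.Perm (Fin (N+1)) := Equiv.swap m (Fin.last N) with hσ
    have hmp := measurePreserving_piCongrLeft (fun _ : Fin (N+1) => μ) σ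
    have hpre : (⇑(MeasurableEquiv.piCongrLeft (fun _ : Fin (N+1) => ℝ) σ)) ⁻¹'
        (A (Fin.last N)) = A m := by
      ext g
      have hTg : ∀ j, (MeasurableEquiv.piCongrLeft (fun _ : Fin (N+1) => ℝ) σ) g (σ j) = g j :=
        fun j => MeasurableEquiv.piCongrLeft_apply_apply (β := fun _ : Fin (N+1) => ℝ) σ g j
      have h2 : (MeasurableEquiv.piCongrLeft (fun _ : Fin (N+1) => ℝ) σ) g (Fin.last N) = g m := by
        have hlm : Fin.last N = σ m := (Equiv.swap_apply_left m (Fin.last N)).symm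
        rw [hlm, hTg]
      have hcount : cnt ((MeasurableEquiv.piCongrLeft (fun _ : Fin (N+1) => ℝ) σ) g)
          (Fin.last N) = cnt g m := by
        rw [hcntdef]
        calc (Finset.univ.filter (fun i =>
                (MeasurableEquiv.piCongrLeft (fun _ : Fin (N+1) => ℝ) σ) g i
                  < (MeasurableEquiv.piCongrLeft (fun _ : Fin (N+1) => ℝ) σ) g (Fin.last N))).card
            = (Finset.univ.filter (fun j =>
                (MeasurableEquiv.piCongrLeft (fun _ : Fin (N+1) => ℝ) σ) g (σ j)
                  < (MeasurableEquiv.piCongrLeft (fun _ : Fin (N+1) => ℝ) σ) g (Fin.last N))).card :=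
              (card_filter_equiv σ _).symm
          _ = (Finset.univ.filter (fun j => g j < g m)).card := by
              simp only [hTg, h2]
      simp only [Set.mem_preimage, hAdef, Set.mem_setOf_eq, hcount]
    calc ν (A m) = ν ((⇑(MeasurableEquiv.piCongrLeft (fun _ : Fin (N+1) => ℝ) σ)) ⁻¹'
          (A (Fin.last N))) := by rw [hpre]
      _ = ν (A (Fin.last N)) := hmp.measure_preimage (hAmeas _).nullMeasurableSet
  -- the a.s. distinctness
  set Dbad : Set Ω := ⋃ (i : Fin (N+1)), ⋃ (j : Fin (N+1)), ⋃ (_ : i ≠ j),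
    {ω | S i ω = S j ω} with hDbaddef
  have hDbad0 : ℙ Dbad = 0 :=
    measure_iUnion_null fun i => measure_iUnion_null fun j => measure_iUnion_null fun hij =>
      indep_eq_null ℙ (S i) (S j) (hSmeas i) (hSmeas j) (hindep.indepFun hij) (hatomless j)
  have hinj : ∀ ω, ω ∉ Dbad → Function.Injective (fun i => S i ω) := by
    intro ω hω i j hij
    by_contra hne
    exact hω (Set.mem_iUnion.mpr ⟨i, Set.mem_iUnion.mpr ⟨j, Set.mem_iUnion.mpr ⟨hne, hij⟩⟩⟩)
  -- membership in C m
  have hmemC : ∀ (ω : Ω) (m : Fin (N+1)),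
      ω ∈ C m ↔ (Finset.univ.filter (fun i => S i ω < S m ω)).card < k := by
    intro ω m
    simp only [hCdef, Set.mem_preimage, hAdef, Set.mem_setOf_eq, hcntdef, hJdef]
  -- sum of probabilities equals k
  have hsum : ∑ m : Fin (N+1), ℙ (C m) = (k : ENNReal) := by
    have h1 : ∀ m, ℙ (C m) = ∫⁻ ω, (C m).indicator (1 : Ω → ENNReal) ω ∂ℙ := by
      intro m
      rw [lintegral_indicator_one (hCmeas m)]
    calc ∑ m : Fin (N+1), ℙ (C m)
        = ∑ m : Fin (N+1), ∫⁻ ω, (C m).indicator (1 : Ω → ENNReal) ω ∂ℙ := by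
          exact Finset.sum_congr rfl fun m _ => h1 m
      _ = ∫⁻ ω, ∑ m : Fin (N+1), (C m).indicator (1 : Ω → ENNReal) ω ∂ℙ :=
          (lintegral_finset_sum _ fun m _ => measurable_const.indicator (hCmeas m)).symm
      _ = ∫⁻ _, (k : ENNReal) ∂ℙ := by
          apply lintegral_congr_ae
          filter_upwards [compl_mem_ae_iff.mpr hDbad0] with ω hω
          have hvinj := hinj ω hω
          have h2 : ∑ m : Fin (N+1), (C m).indicator (1 : Ω → ENNReal) ω
              = ((Finset.univ.filter (fun m => ω ∈ C m)).card : ENNReal) := by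
            rw [Finset.card_filter]
            push_cast
            apply Finset.sum_congr rfl
            intro m _
            by_cases h : ω ∈ C m <;> simp [Set.indicator_apply, h]
          rw [h2]
          have h3 : (Finset.univ.filter (fun m => ω ∈ C m)).card
              = (Finset.univ.filter (fun m =>
                  (Finset.univ.filter (fun i => S i ω < S m ω)).card < k)).card := by
            apply congrArg
            apply Finset.filter_congr
            intro m _
            exact hmemC ω m
          rw [h3, rank_count (fun i => S i ω) hvinj k hkN1]
      _ = (k : ENNReal) := by simp
  -- all probabilities are equal, so each is k/(N+1)
  have hallEq : ∀ m, ℙ (C m) = ℙ (C (Fin.last N)) := by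
    intro m; rw [hPC m, hPC (Fin.last N), hsym m]
  have hconst : ((N:ENNReal) + 1) * ℙ (C (Fin.last N)) = (k : ENNReal) := by
    calc ((N:ENNReal) + 1) * ℙ (C (Fin.last N))
        = ∑ _m : Fin (N+1), ℙ (C (Fin.last N)) := by
          rw [Finset.sum_const, Finset.card_univ, Fintype.card_fin, nsmul_eq_mul]
          push_cast; ring
      _ = ∑ m : Fin (N+1), ℙ (C m) := Finset.sum_congr rfl fun m _ => (hallEq m).symm
      _ = (k : ENNReal) := hsum
  have hPlast : (ℙ (C (Fin.last N))).toReal = (k : ℝ) / ((N:ℝ) + 1) := by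
    have := congrArg ENNReal.toReal hconst
    rw [ENNReal.toReal_mul] at this
    have hN : (((N:ENNReal) + 1)).toReal = (N:ℝ) + 1 := by
      rw [ENNReal.toReal_add (by simp) (by simp)]; simp
    have hkk : ((k : ENNReal)).toReal = (k:ℝ) := by simp
    rw [hN, hkk] at this
    field_simp
    linarith [this]
  -- the event equals C last a.e.
  have hEC : ℙ {ω | ((S (Fin.last N) ω : ℝ) : EReal) ≤ Q ω} = ℙ (C (Fin.last N)) := by
    apply measure_congr
    rw [Filter.eventuallyEq_set]
    filter_upwards [compl_mem_ae_iff.mpr hDbad0] with ω hω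
    have hvinj := hinj ω hω
    show ((S (Fin.last N) ω : ℝ) : EReal) ≤ Q ω ↔ ω ∈ C (Fin.last N)
    rw [hQ ω, hmemC ω (Fin.last N)]
    by_cases h : 1 ≤ k ∧ k ≤ N
    · rw [dif_pos h]
      rw [EReal.coe_le_coe_iff]
      have hfinj : Function.Injective (fun i : Fin N => S i.castSucc ω) := by
        intro a b hab
        exact Fin.castSucc_injective N (hvinj hab)
      rw [kthSmallest_le_iff _ hfinj k h.1 h.2]
      have hc : (Finset.univ.filter (fun i : Fin (N+1) => S i ω < S (Fin.last N) ω)).card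
          = (Finset.univ.filter (fun i : Fin N => S i.castSucc ω < S (Fin.last N) ω)).card :=
        card_filter_castSucc _ (lt_irrefl _)
      rw [hc]
    · rw [dif_neg h]
      have hkeq : k = N + 1 := by omega
      constructor
      · intro _
        calc (Finset.univ.filter (fun i => S i ω < S (Fin.last N) ω)).card
            ≤ N := card_filter_lt_self_le _ _
          _ < k := by omega
      · intro _; exact le_top
  rw [hEC, hPlast]
  -- final arithmetic
  have hceil : (k:ℝ) < (1-α) * ((N:ℝ)+1) + 1 := by
    have h := Int.ceil_lt_add_one ((1-α) * ((N:ℝ)+1))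
    have hkr : (k:ℝ) = ((⌈(1-α) * ((N:ℝ)+1)⌉ : ℤ) : ℝ) := by
      rw [← hk]; push_cast; ring
    rw [hkr]; push_cast at h; linarith
  have hrw : (1 - α + 1/((N:ℝ)+1)) = ((1-α)*((N:ℝ)+1)+1)/((N:ℝ)+1) := by
    field_simp
  rw [hrw]
  have h2 := hceil.le
  gcongr
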